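/- Fix $\lambda_0 < 0 < \lambda_1$. For $\theta \in [0,1)$ define $\Lambda(\theta) = \log\left(-\lambda_0 \int_0^\infty \frac{e^{\lambda_0 t}}{1 - \theta e^{-\lambda_1 t}}\, dt\right)$. Then $\Lambda$ is differentiable on $(0,1)$ with $\Lambda'(\theta) = \frac{\int_0^\infty e^{\lambda_0 t}\frac{e^{-\lambda_1 t}}{(1-\theta e^{-\lambda_1 t})^2} dt}{\int_0^\infty e^{\lambda_0 t}\frac{1}{1-\theta e^{-\lambda_1 t}} dt}$, and $\Lambda'$ is strictly increasing on $(0,1)$ with $\lim_{\theta \uparrow 1} \Lambda'(\theta) = \infty$. -/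

import Mathlib

open Real Filter MeasureTheory

open Real Filter MeasureTheory Set Metric

namespace S14

noncomputable def f (lam0 lam1 x t : ℝ) : ℝ :=
  Real.exp (lam0 * t) / (1 - x * Real.exp (-lam1 * t))

noncomputable def f1 (lam0 lam1 x t : ℝ) : ℝ :=
  Real.exp (lam0 * t) * Real.exp (-lam1 * t) / (1 - x * Real.exp (-lam1 * t)) ^ 2

noncomputable def f2 (lam0 lam1 x t : ℝ) : ℝ :=
  2 * (Real.exp (lam0 * t) * Real.exp (-lam1 * t) ^ 2) / (1 - x * Real.exp (-lam1 * t)) ^ 3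

variable {lam0 lam1 : ℝ}

lemma exp_int (hlam0 : lam0 < 0) :
    IntegrableOn (fun t => Real.exp (lam0 * t)) (Ioi (0:ℝ)) := by
  have h := exp_neg_integrableOn_Ioi (0:ℝ) (neg_pos.2 hlam0)
  simpa [neg_neg] using h

lemma denom_lb (hlam1 : 0 < lam1) {x t : ℝ} (hx0 : 0 ≤ x) (hx1 : x < 1) (ht : 0 ≤ t) :
    0 < 1 - x ∧ 1 - x ≤ 1 - x * Real.exp (-lam1 * t) ∧ 1 - x * Real.exp (-lam1 * t) ≤ 1 := by
  have he1 : Real.exp (-lam1 * t) ≤ 1 := by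
    apply Real.exp_le_one_iff.2; nlinarith
  have he0 : 0 < Real.exp (-lam1 * t) := Real.exp_pos _
  refine ⟨by linarith, by nlinarith, by nlinarith⟩

lemma meas_aux {x : ℝ} (hx0 : 0 ≤ x) (hx1 : x < 1) (hlam1 : 0 < lam1)
    (g : ℝ → ℝ → ℝ) (n : ℕ)
    (hg : g = fun x t => Real.exp (lam0 * t) * Real.exp (-lam1 * t) ^ n / (1 - x * Real.exp (-lam1 * t)) ^ (n+1)) :
    ContinuousOn (g x) (Ioi (0:ℝ)) := by
  subst hg
  apply ContinuousOn.div
  · fun_prop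
  · fun_prop
  · intro t ht
    have h := denom_lb hlam1 hx0 hx1 (le_of_lt ht)
    exact pow_ne_zero _ (ne_of_gt (lt_of_lt_of_le h.1 h.2.1))


lemma contOn_f {x : ℝ} (hx0 : 0 ≤ x) (hx1 : x < 1) (hlam1 : 0 < lam1) :
    ContinuousOn (f lam0 lam1 x) (Ioi (0:ℝ)) := by
  apply ContinuousOn.div (by fun_prop) (by fun_prop)
  intro t ht
  have h := denom_lb hlam1 hx0 hx1 (le_of_lt ht)
  exact ne_of_gt (lt_of_lt_of_le h.1 h.2.1)

lemma contOn_f1 {x : ℝ} (hx0 : 0 ≤ x) (hx1 : x < 1) (hlam1 : 0 < lam1) :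
    ContinuousOn (f1 lam0 lam1 x) (Ioi (0:ℝ)) := by
  apply ContinuousOn.div (by fun_prop) (by fun_prop)
  intro t ht
  have h := denom_lb hlam1 hx0 hx1 (le_of_lt ht)
  exact pow_ne_zero _ (ne_of_gt (lt_of_lt_of_le h.1 h.2.1))

lemma contOn_f2 {x : ℝ} (hx0 : 0 ≤ x) (hx1 : x < 1) (hlam1 : 0 < lam1) :
    ContinuousOn (f2 lam0 lam1 x) (Ioi (0:ℝ)) := by
  apply ContinuousOn.div (by fun_prop) (by fun_prop)
  intro t ht
  have h := denom_lb hlam1 hx0 hx1 (le_of_lt ht)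
  exact pow_ne_zero _ (ne_of_gt (lt_of_lt_of_le h.1 h.2.1))

lemma integrable_dom (hlam0 : lam0 < 0) {h : ℝ → ℝ} (C : ℝ)
    (hm : ContinuousOn h (Ioi (0:ℝ)))
    (hb : ∀ t ∈ Ioi (0:ℝ), ‖h t‖ ≤ C * Real.exp (lam0 * t)) :
    IntegrableOn h (Ioi 0) := by
  apply Integrable.mono' ((exp_int hlam0).const_mul C)
    (hm.aestronglyMeasurable measurableSet_Ioi)
  rw [ae_restrict_iff' measurableSet_Ioi]
  exact Filter.Eventually.of_forall hb

lemma bound_f (hlam1 : 0 < lam1) {x t : ℝ} (hx0 : 0 ≤ x) (hx1 : x < 1) (ht : 0 < t) :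
    ‖f lam0 lam1 x t‖ ≤ (1 - x)⁻¹ * Real.exp (lam0 * t) := by
  obtain ⟨h1, h2, h3⟩ := denom_lb hlam1 hx0 hx1 ht.le
  have hD : 0 < 1 - x * Real.exp (-lam1 * t) := lt_of_lt_of_le h1 h2
  have hE := Real.exp_pos (lam0 * t)
  rw [f, Real.norm_eq_abs, abs_of_pos (by positivity), inv_mul_eq_div]
  exact div_le_div₀ hE.le le_rfl h1 h2

lemma bound_f1 (hlam1 : 0 < lam1) {x t : ℝ} (hx0 : 0 ≤ x) (hx1 : x < 1) (ht : 0 < t) :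
    ‖f1 lam0 lam1 x t‖ ≤ ((1 - x)^2)⁻¹ * Real.exp (lam0 * t) := by
  obtain ⟨h1, h2, h3⟩ := denom_lb hlam1 hx0 hx1 ht.le
  have hD : 0 < 1 - x * Real.exp (-lam1 * t) := lt_of_lt_of_le h1 h2
  have he1 : Real.exp (-lam1 * t) ≤ 1 := by apply Real.exp_le_one_iff.2; nlinarith
  have he0 : 0 < Real.exp (-lam1 * t) := Real.exp_pos _
  have hE := Real.exp_pos (lam0 * t)
  rw [f1, Real.norm_eq_abs, abs_of_pos (by positivity), inv_mul_eq_div]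
  exact div_le_div₀ hE.le (by nlinarith) (by positivity) (pow_le_pow_left₀ h1.le h2 2)

lemma bound_f2 (hlam1 : 0 < lam1) {x t : ℝ} (hx0 : 0 ≤ x) (hx1 : x < 1) (ht : 0 < t) :
    ‖f2 lam0 lam1 x t‖ ≤ (2 * ((1 - x)^3)⁻¹) * Real.exp (lam0 * t) := by
  obtain ⟨h1, h2, h3⟩ := denom_lb hlam1 hx0 hx1 ht.le
  have hD : 0 < 1 - x * Real.exp (-lam1 * t) := lt_of_lt_of_le h1 h2
  have he1 : Real.exp (-lam1 * t) ≤ 1 := by apply Real.exp_le_one_iff.2; nlinarith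
  have he0 : 0 < Real.exp (-lam1 * t) := Real.exp_pos _
  have hE := Real.exp_pos (lam0 * t)
  rw [f2, Real.norm_eq_abs, abs_of_pos (by positivity)]
  have : (2 * ((1 - x)^3)⁻¹) * Real.exp (lam0 * t) = 2 * Real.exp (lam0 * t) / (1-x)^3 := by
    ring
  rw [this]
  have hee : Real.exp (-lam1 * t) ^ 2 ≤ 1 := by nlinarith
  exact div_le_div₀ (by positivity) (by nlinarith) (by positivity) (pow_le_pow_left₀ h1.le h2 3)

lemma int_f (hlam0 : lam0 < 0) (hlam1 : 0 < lam1) {x : ℝ} (hx0 : 0 ≤ x) (hx1 : x < 1) :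
    IntegrableOn (f lam0 lam1 x) (Ioi 0) :=
  integrable_dom hlam0 _ (contOn_f hx0 hx1 hlam1) (fun t ht => bound_f hlam1 hx0 hx1 ht)

lemma int_f1 (hlam0 : lam0 < 0) (hlam1 : 0 < lam1) {x : ℝ} (hx0 : 0 ≤ x) (hx1 : x < 1) :
    IntegrableOn (f1 lam0 lam1 x) (Ioi 0) :=
  integrable_dom hlam0 _ (contOn_f1 hx0 hx1 hlam1) (fun t ht => bound_f1 hlam1 hx0 hx1 ht)

lemma int_f2 (hlam0 : lam0 < 0) (hlam1 : 0 < lam1) {x : ℝ} (hx0 : 0 ≤ x) (hx1 : x < 1) :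
    IntegrableOn (f2 lam0 lam1 x) (Ioi 0) :=
  integrable_dom hlam0 _ (contOn_f2 hx0 hx1 hlam1) (fun t ht => bound_f2 hlam1 hx0 hx1 ht)


lemma hasDerivAt_f_pt (hlam1 : 0 < lam1) {x t : ℝ} (ht : 0 ≤ t) (hx0 : 0 ≤ x) (hx1 : x < 1) :
    HasDerivAt (fun y => f lam0 lam1 y t) (f1 lam0 lam1 x t) x := by
  obtain ⟨h1, h2, h3⟩ := denom_lb hlam1 hx0 hx1 ht
  have hD : (1 - x * Real.exp (-lam1 * t)) ≠ 0 := ne_of_gt (lt_of_lt_of_le h1 h2)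
  have hu : HasDerivAt (fun y : ℝ => 1 - y * Real.exp (-lam1 * t))
      (-(Real.exp (-lam1 * t))) x := by
    simpa using ((hasDerivAt_id x).mul_const (Real.exp (-lam1 * t))).const_sub 1
  have := ((hasDerivAt_const x (Real.exp (lam0 * t))).div hu hD :
    HasDerivAt (fun y => Real.exp (lam0 * t) / (1 - y * Real.exp (-lam1 * t))) _ x)
  refine this.congr_deriv ?_
  rw [f1]
  field_simp
  ring

lemma hasDerivAt_f1_pt (hlam1 : 0 < lam1) {x t : ℝ} (ht : 0 ≤ t) (hx0 : 0 ≤ x) (hx1 : x < 1) :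
    HasDerivAt (fun y => f1 lam0 lam1 y t) (f2 lam0 lam1 x t) x := by
  obtain ⟨h1, h2, h3⟩ := denom_lb hlam1 hx0 hx1 ht
  have hD0 : 0 < (1 - x * Real.exp (-lam1 * t)) := lt_of_lt_of_le h1 h2
  have hD : (1 - x * Real.exp (-lam1 * t)) ^ 2 ≠ 0 := pow_ne_zero _ (ne_of_gt hD0)
  have hu : HasDerivAt (fun y : ℝ => 1 - y * Real.exp (-lam1 * t))
      (-(Real.exp (-lam1 * t))) x := by
    simpa using ((hasDerivAt_id x).mul_const (Real.exp (-lam1 * t))).const_sub 1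
  have hu2 : HasDerivAt (fun y : ℝ => (1 - y * Real.exp (-lam1 * t)) ^ 2)
      (2 * (1 - x * Real.exp (-lam1 * t)) ^ 1 * (-(Real.exp (-lam1 * t)))) x := by
    exact (hu.pow 2).congr_deriv (by norm_num)
  have := ((hasDerivAt_const x (Real.exp (lam0 * t) * Real.exp (-lam1 * t))).div hu2 hD :
    HasDerivAt (fun y => Real.exp (lam0 * t) * Real.exp (-lam1 * t) / (1 - y * Real.exp (-lam1 * t)) ^ 2) _ x)
  refine this.congr_deriv ?_
  rw [f2]
  rw [div_eq_div_iff (by positivity) (by positivity)]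
  ring


lemma ball_sub {θ : ℝ} (hθ0 : 0 < θ) (hθ1 : θ < 1) :
    ∀ x ∈ ball θ (min θ ((1-θ)/2)), 0 ≤ x ∧ x ≤ (1+θ)/2 := by
  intro x hx
  rw [mem_ball, Real.dist_eq, abs_lt] at hx
  have h1 := min_le_left θ ((1-θ)/2)
  have h2 := min_le_right θ ((1-θ)/2)
  exact ⟨by linarith, by linarith⟩

lemma hasDerivAt_I (hlam0 : lam0 < 0) (hlam1 : 0 < lam1) {θ : ℝ} (hθ : θ ∈ Ioo (0:ℝ) 1) :
    HasDerivAt (fun x => ∫ t in Ioi (0:ℝ), f lam0 lam1 x t)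
      (∫ t in Ioi (0:ℝ), f1 lam0 lam1 θ t) θ := by
  obtain ⟨hθ0, hθ1⟩ := hθ
  have hb1 : (1+θ)/2 < 1 := by linarith
  have hεpos : 0 < min θ ((1-θ)/2) := lt_min hθ0 (by linarith)
  have hball := ball_sub hθ0 hθ1
  have key := hasDerivAt_integral_of_dominated_loc_of_deriv_le
      (μ := volume.restrict (Ioi 0)) (F := fun x t => f lam0 lam1 x t)
      (F' := fun x t => f1 lam0 lam1 x t)
      (bound := fun t => ((1 - (1+θ)/2)^2)⁻¹ * Real.exp (lam0 * t))
      (Metric.ball_mem_nhds θ hεpos) ?_ (int_f hlam0 hlam1 hθ0.le hθ1) ?_ ?_ ?_ ?_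
  · exact key.2
  · filter_upwards [Metric.ball_mem_nhds θ hεpos] with x hx
    obtain ⟨hx0, hxb⟩ := hball x hx
    exact ((contOn_f hx0 (lt_of_le_of_lt hxb hb1) hlam1).aestronglyMeasurable measurableSet_Ioi)
  · exact ((contOn_f1 hθ0.le hθ1 hlam1).aestronglyMeasurable measurableSet_Ioi)
  · rw [ae_restrict_iff' measurableSet_Ioi]
    apply Filter.Eventually.of_forall
    intro t ht x hx
    obtain ⟨hx0, hxb⟩ := hball x hx
    refine le_trans (bound_f1 hlam1 hx0 (lt_of_le_of_lt hxb hb1) ht) ?_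
    have h1 : (0:ℝ) < 1 - (1+θ)/2 := by linarith
    have h2 : 1 - (1+θ)/2 ≤ 1 - x := by linarith
    apply mul_le_mul_of_nonneg_right _ (Real.exp_pos _).le
    exact inv_anti₀ (pow_pos h1 2) (pow_le_pow_left₀ h1.le h2 2)
  · exact (exp_int hlam0).const_mul _
  · rw [ae_restrict_iff' measurableSet_Ioi]
    apply Filter.Eventually.of_forall
    intro t ht x hx
    obtain ⟨hx0, hxb⟩ := hball x hx
    exact hasDerivAt_f_pt hlam1 (le_of_lt ht) hx0 (lt_of_le_of_lt hxb hb1)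

lemma hasDerivAt_I1 (hlam0 : lam0 < 0) (hlam1 : 0 < lam1) {θ : ℝ} (hθ : θ ∈ Ioo (0:ℝ) 1) :
    HasDerivAt (fun x => ∫ t in Ioi (0:ℝ), f1 lam0 lam1 x t)
      (∫ t in Ioi (0:ℝ), f2 lam0 lam1 θ t) θ := by
  obtain ⟨hθ0, hθ1⟩ := hθ
  have hb1 : (1+θ)/2 < 1 := by linarith
  have hεpos : 0 < min θ ((1-θ)/2) := lt_min hθ0 (by linarith)
  have hball := ball_sub hθ0 hθ1
  have key := hasDerivAt_integral_of_dominated_loc_of_deriv_le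
      (μ := volume.restrict (Ioi 0)) (F := fun x t => f1 lam0 lam1 x t)
      (F' := fun x t => f2 lam0 lam1 x t)
      (bound := fun t => (2 * ((1 - (1+θ)/2)^3)⁻¹) * Real.exp (lam0 * t))
      (Metric.ball_mem_nhds θ hεpos) ?_ (int_f1 hlam0 hlam1 hθ0.le hθ1) ?_ ?_ ?_ ?_
  · exact key.2
  · filter_upwards [Metric.ball_mem_nhds θ hεpos] with x hx
    obtain ⟨hx0, hxb⟩ := hball x hx
    exact ((contOn_f1 hx0 (lt_of_le_of_lt hxb hb1) hlam1).aestronglyMeasurable measurableSet_Ioi)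
  · exact ((contOn_f2 hθ0.le hθ1 hlam1).aestronglyMeasurable measurableSet_Ioi)
  · rw [ae_restrict_iff' measurableSet_Ioi]
    apply Filter.Eventually.of_forall
    intro t ht x hx
    obtain ⟨hx0, hxb⟩ := hball x hx
    refine le_trans (bound_f2 hlam1 hx0 (lt_of_le_of_lt hxb hb1) ht) ?_
    have h1 : (0:ℝ) < 1 - (1+θ)/2 := by linarith
    have h2 : 1 - (1+θ)/2 ≤ 1 - x := by linarith
    apply mul_le_mul_of_nonneg_right _ (Real.exp_pos _).le
    apply mul_le_mul_of_nonneg_left _ (by norm_num)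
    exact inv_anti₀ (pow_pos h1 3) (pow_le_pow_left₀ h1.le h2 3)
  · exact (exp_int hlam0).const_mul _
  · rw [ae_restrict_iff' measurableSet_Ioi]
    apply Filter.Eventually.of_forall
    intro t ht x hx
    obtain ⟨hx0, hxb⟩ := hball x hx
    exact hasDerivAt_f1_pt hlam1 (le_of_lt ht) hx0 (lt_of_le_of_lt hxb hb1)


lemma f_pos (hlam1 : 0 < lam1) {θ : ℝ} (hθ0 : 0 ≤ θ) (hθ1 : θ < 1) {t : ℝ} (ht : t ∈ Ioi (0:ℝ)) :
    0 < f lam0 lam1 θ t := by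
  obtain ⟨h1,h2,h3⟩ := denom_lb hlam1 hθ0 hθ1 (le_of_lt ht)
  exact div_pos (Real.exp_pos _) (lt_of_lt_of_le h1 h2)

lemma f1_pos (hlam1 : 0 < lam1) {θ : ℝ} (hθ0 : 0 ≤ θ) (hθ1 : θ < 1) {t : ℝ} (ht : t ∈ Ioi (0:ℝ)) :
    0 < f1 lam0 lam1 θ t := by
  obtain ⟨h1,h2,h3⟩ := denom_lb hlam1 hθ0 hθ1 (le_of_lt ht)
  exact div_pos (by positivity) (pow_pos (lt_of_lt_of_le h1 h2) 2)

lemma I_pos (hlam0 : lam0 < 0) (hlam1 : 0 < lam1) {θ : ℝ} (hθ0 : 0 ≤ θ) (hθ1 : θ < 1) :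
    0 < ∫ t in Ioi (0:ℝ), f lam0 lam1 θ t := by
  rw [setIntegral_pos_iff_support_of_nonneg_ae
      ((ae_restrict_iff' measurableSet_Ioi).2 (Filter.Eventually.of_forall
        (fun t ht => (f_pos hlam1 hθ0 hθ1 ht).le))) (int_f hlam0 hlam1 hθ0 hθ1)]
  refine lt_of_lt_of_le ?_ (measure_mono
    (fun t ht => ⟨ne_of_gt (f_pos hlam1 hθ0 hθ1 ht), ht⟩))
  rw [Real.volume_Ioi]
  exact ENNReal.zero_lt_top

lemma I1_pos (hlam0 : lam0 < 0) (hlam1 : 0 < lam1) {θ : ℝ} (hθ0 : 0 ≤ θ) (hθ1 : θ < 1) :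
    0 < ∫ t in Ioi (0:ℝ), f1 lam0 lam1 θ t := by
  rw [setIntegral_pos_iff_support_of_nonneg_ae
      ((ae_restrict_iff' measurableSet_Ioi).2 (Filter.Eventually.of_forall
        (fun t ht => (f1_pos hlam1 hθ0 hθ1 ht).le))) (int_f1 hlam0 hlam1 hθ0 hθ1)]
  refine lt_of_lt_of_le ?_ (measure_mono
    (fun t ht => ⟨ne_of_gt (f1_pos hlam1 hθ0 hθ1 ht), ht⟩))
  rw [Real.volume_Ioi]
  exact ENNReal.zero_lt_top

lemma cs (hlam0 : lam0 < 0) (hlam1 : 0 < lam1) {θ : ℝ} (hθ0 : 0 ≤ θ) (hθ1 : θ < 1) :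
    2 * (∫ t in Ioi (0:ℝ), f1 lam0 lam1 θ t)^2 ≤
      (∫ t in Ioi (0:ℝ), f2 lam0 lam1 θ t) * (∫ t in Ioi (0:ℝ), f lam0 lam1 θ t) := by
  set I := ∫ t in Ioi (0:ℝ), f lam0 lam1 θ t with hIdef
  set I1 := ∫ t in Ioi (0:ℝ), f1 lam0 lam1 θ t with hI1def
  set I2 := ∫ t in Ioi (0:ℝ), f2 lam0 lam1 θ t with hI2def
  have hIpos : 0 < I := I_pos hlam0 hlam1 hθ0 hθ1
  set c := I1 / I with hc
  have key : 0 ≤ ∫ t in Ioi (0:ℝ),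
      ((1/2) * f2 lam0 lam1 θ t - (2*c) * f1 lam0 lam1 θ t + c^2 * f lam0 lam1 θ t) := by
    apply setIntegral_nonneg measurableSet_Ioi
    intro t ht
    obtain ⟨h1,h2,h3⟩ := denom_lb hlam1 hθ0 hθ1 (le_of_lt ht)
    have hD : 0 < 1 - θ * Real.exp (-lam1*t) := lt_of_lt_of_le h1 h2
    have heq : (1/2) * f2 lam0 lam1 θ t - (2*c) * f1 lam0 lam1 θ t + c^2 * f lam0 lam1 θ t
        = (Real.exp (lam0*t) / (1 - θ*Real.exp (-lam1*t))) *
          (Real.exp (-lam1*t)/(1 - θ*Real.exp (-lam1*t)) - c)^2 := by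
      rw [f, f1, f2]
      set D := 1 - θ * Real.exp (-lam1 * t) with hDdef
      field_simp
      ring
    rw [heq]
    positivity
  have hEq : (∫ t in Ioi (0:ℝ),
      ((1/2) * f2 lam0 lam1 θ t - (2*c) * f1 lam0 lam1 θ t + c^2 * f lam0 lam1 θ t))
      = (1/2) * I2 - (2*c) * I1 + c^2 * I := by
    rw [integral_add, integral_sub, integral_const_mul, integral_const_mul, integral_const_mul]
    · exact (int_f2 hlam0 hlam1 hθ0 hθ1).const_mul _
    · exact (int_f1 hlam0 hlam1 hθ0 hθ1).const_mul _
    · exact ((int_f2 hlam0 hlam1 hθ0 hθ1).const_mul _).sub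
        ((int_f1 hlam0 hlam1 hθ0 hθ1).const_mul _)
    · exact (int_f hlam0 hlam1 hθ0 hθ1).const_mul _
  rw [hEq] at key
  have hcx : c * I = I1 := by rw [hc, div_mul_cancel₀ _ hIpos.ne']
  nlinarith [mul_nonneg hIpos.le key, hcx, sq_nonneg I1]


lemma part1 (hlam0 : lam0 < 0) (hlam1 : 0 < lam1) {θ : ℝ} (hθ : θ ∈ Ioo (0:ℝ) 1) :
    HasDerivAt (fun x : ℝ => Real.log (-lam0 * ∫ t in Ioi (0:ℝ), f lam0 lam1 x t))
      ((∫ t in Ioi (0:ℝ), f1 lam0 lam1 θ t) / (∫ t in Ioi (0:ℝ), f lam0 lam1 θ t)) θ := by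
  have hI := hasDerivAt_I hlam0 hlam1 hθ
  have hIpos := I_pos hlam0 hlam1 hθ.1.le hθ.2
  have hne : -lam0 * (∫ t in Ioi (0:ℝ), f lam0 lam1 θ t) ≠ 0 :=
    ne_of_gt (mul_pos (neg_pos.2 hlam0) hIpos)
  have h := (hI.const_mul (-lam0)).log hne
  convert h using 1
  rw [mul_div_mul_left _ _ (ne_of_gt (neg_pos.2 hlam0))]

lemma hasDerivAt_R (hlam0 : lam0 < 0) (hlam1 : 0 < lam1) {θ : ℝ} (hθ : θ ∈ Ioo (0:ℝ) 1) :
    HasDerivAt (fun x : ℝ =>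
        (∫ t in Ioi (0:ℝ), f1 lam0 lam1 x t) / (∫ t in Ioi (0:ℝ), f lam0 lam1 x t))
      (((∫ t in Ioi (0:ℝ), f2 lam0 lam1 θ t) * (∫ t in Ioi (0:ℝ), f lam0 lam1 θ t) -
        (∫ t in Ioi (0:ℝ), f1 lam0 lam1 θ t) * (∫ t in Ioi (0:ℝ), f1 lam0 lam1 θ t)) /
        (∫ t in Ioi (0:ℝ), f lam0 lam1 θ t) ^ 2) θ :=
  (hasDerivAt_I1 hlam0 hlam1 hθ).div (hasDerivAt_I hlam0 hlam1 hθ)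
    (ne_of_gt (I_pos hlam0 hlam1 hθ.1.le hθ.2))

lemma Rderiv_pos (hlam0 : lam0 < 0) (hlam1 : 0 < lam1) {θ : ℝ} (hθ : θ ∈ Ioo (0:ℝ) 1) :
    0 < ((∫ t in Ioi (0:ℝ), f2 lam0 lam1 θ t) * (∫ t in Ioi (0:ℝ), f lam0 lam1 θ t) -
        (∫ t in Ioi (0:ℝ), f1 lam0 lam1 θ t) * (∫ t in Ioi (0:ℝ), f1 lam0 lam1 θ t)) /
        (∫ t in Ioi (0:ℝ), f lam0 lam1 θ t) ^ 2 := by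
  have h1 := cs hlam0 hlam1 hθ.1.le hθ.2
  have h2 := I1_pos hlam0 hlam1 hθ.1.le hθ.2
  have h3 := I_pos hlam0 hlam1 hθ.1.le hθ.2
  apply div_pos (by nlinarith) (pow_pos h3 2)

lemma part2 (hlam0 : lam0 < 0) (hlam1 : 0 < lam1) :
    StrictMonoOn (fun θ : ℝ =>
        (∫ t in Ioi (0:ℝ), f1 lam0 lam1 θ t) / (∫ t in Ioi (0:ℝ), f lam0 lam1 θ t))
      (Ioo (0:ℝ) 1) := by
  apply strictMonoOn_of_deriv_pos (convex_Ioo 0 1)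
  · intro x hx
    exact (hasDerivAt_R hlam0 hlam1 hx).continuousAt.continuousWithinAt
  · intro x hx
    rw [interior_Ioo] at hx
    rw [(hasDerivAt_R hlam0 hlam1 hx).deriv]
    exact Rderiv_pos hlam0 hlam1 hx

lemma I_lb (hlam0 : lam0 < 0) (hlam1 : 0 < lam1) {θ : ℝ} (hθ0 : 0 ≤ θ) (hθ1 : θ < 1) :
    Real.exp lam0 / lam1 * (Real.log (1 - θ + lam1) - Real.log (1 - θ))
      ≤ ∫ t in Ioi (0:ℝ), f lam0 lam1 θ t := by
  have h1θ : 0 < 1 - θ := by linarith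
  have hcont : ContinuousOn (fun t : ℝ => Real.exp lam0 / ((1-θ) + lam1 * t)) (Icc (0:ℝ) 1) := by
    apply ContinuousOn.div continuousOn_const (by fun_prop)
    intro t ht
    nlinarith [ht.1]
  have hintIoc : IntegrableOn (fun t : ℝ => Real.exp lam0 / ((1-θ) + lam1*t)) (Ioc (0:ℝ) 1) :=
    (hcont.integrableOn_compact isCompact_Icc).mono_set Ioc_subset_Icc_self
  have hpt : ∀ t ∈ Ioc (0:ℝ) 1, Real.exp lam0 / ((1-θ) + lam1*t) ≤ f lam0 lam1 θ t := by
    intro t ht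
    obtain ⟨ht0, ht1⟩ := ht
    obtain ⟨g1, g2, g3⟩ := denom_lb hlam1 hθ0 hθ1 ht0.le
    have hD : 0 < 1 - θ*Real.exp (-lam1*t) := lt_of_lt_of_le g1 g2
    have hden : 1 - θ*Real.exp (-lam1*t) ≤ (1-θ) + lam1*t := by
      have hexp := Real.add_one_le_exp (-lam1*t)
      nlinarith [mul_le_mul_of_nonneg_left hexp hθ0, mul_nonneg hlam1.le ht0.le]
    have hnum : Real.exp lam0 ≤ Real.exp (lam0 * t) := by
      apply Real.exp_le_exp.2
      nlinarith
    exact div_le_div₀ (Real.exp_pos _).le hnum hD hden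
  have hcalc : ∫ t in Ioc (0:ℝ) 1, Real.exp lam0 / ((1-θ) + lam1*t)
      = Real.exp lam0 / lam1 * (Real.log (1 - θ + lam1) - Real.log (1 - θ)) := by
    rw [← intervalIntegral.integral_of_le zero_le_one]
    have hderiv : ∀ t ∈ uIcc (0:ℝ) 1,
        HasDerivAt (fun u : ℝ => Real.exp lam0 / lam1 * Real.log ((1-θ) + lam1 * u))
          (Real.exp lam0 / ((1-θ) + lam1*t)) t := by
      intro t ht
      rw [uIcc_of_le zero_le_one] at ht
      have hpos : 0 < (1-θ) + lam1 * t := by nlinarith [ht.1]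
      have hin : HasDerivAt (fun u : ℝ => (1-θ) + lam1 * u) lam1 t := by
        simpa using ((hasDerivAt_id t).const_mul lam1).const_add (1-θ)
      have hlog := (hin.log (ne_of_gt hpos)).const_mul (Real.exp lam0 / lam1)
      refine hlog.congr_deriv ?_
      rw [div_mul_div_comm, mul_comm (Real.exp lam0) lam1, mul_div_mul_left _ _ (ne_of_gt hlam1)]
    rw [intervalIntegral.integral_eq_sub_of_hasDerivAt hderiv]
    · norm_num [mul_sub]
    · rw [← uIcc_of_le (zero_le_one (α := ℝ))] at hcont
      exact hcont.intervalIntegrable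
  rw [← hcalc]
  calc ∫ t in Ioc (0:ℝ) 1, Real.exp lam0 / ((1-θ) + lam1*t)
      ≤ ∫ t in Ioc (0:ℝ) 1, f lam0 lam1 θ t := by
        apply setIntegral_mono_on hintIoc
          ((int_f hlam0 hlam1 hθ0 hθ1).mono_set Ioc_subset_Ioi_self) measurableSet_Ioc hpt
    _ ≤ ∫ t in Ioi (0:ℝ), f lam0 lam1 θ t := by
        apply setIntegral_mono_set (int_f hlam0 hlam1 hθ0 hθ1)
          ((ae_restrict_iff' measurableSet_Ioi).2 (Filter.Eventually.of_forall
            (fun t ht => (f_pos hlam1 hθ0 hθ1 ht).le)))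
          (HasSubset.Subset.eventuallyLE Ioc_subset_Ioi_self)


lemma tendsto_LB (hlam0 : lam0 < 0) (hlam1 : 0 < lam1) :
    Tendsto (fun θ : ℝ => Real.exp lam0 / lam1 * (Real.log (1 - θ + lam1) - Real.log (1 - θ)))
      (nhdsWithin 1 (Iio 1)) atTop := by
  have h0 : Tendsto (fun θ : ℝ => 1 - θ) (nhdsWithin 1 (Iio 1)) (nhdsWithin 0 (Ioi 0)) := by
    apply tendsto_nhdsWithin_of_tendsto_nhds_of_eventually_within
    · have h : Tendsto (fun θ : ℝ => 1 - θ) (nhds 1) (nhds (1-1)) :=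
        (continuous_const.sub continuous_id).tendsto 1
      simpa using h.mono_left nhdsWithin_le_nhds
    · filter_upwards [self_mem_nhdsWithin] with θ hθ
      simpa using sub_pos.2 (mem_Iio.1 hθ)
  have hlogb : Tendsto (fun θ : ℝ => Real.log (1 - θ)) (nhdsWithin 1 (Iio 1)) atBot :=
    Real.tendsto_log_nhdsGT_zero.comp h0
  have hloga : Tendsto (fun θ : ℝ => Real.log (1 - θ + lam1)) (nhdsWithin 1 (Iio 1))
      (nhds (Real.log lam1)) := by
    have h1 : Tendsto (fun θ : ℝ => 1 - θ + lam1) (nhds 1) (nhds (1-1+lam1)) :=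
      ((continuous_const.sub continuous_id).add continuous_const).tendsto 1
    have h2 : Tendsto (fun θ : ℝ => 1 - θ + lam1) (nhdsWithin 1 (Iio 1)) (nhds lam1) := by
      simpa using h1.mono_left nhdsWithin_le_nhds
    exact ((Real.continuousAt_log (ne_of_gt hlam1)).tendsto).comp h2
  have hneg : Tendsto (fun θ : ℝ => -Real.log (1 - θ)) (nhdsWithin 1 (Iio 1)) atTop :=
    tendsto_neg_atBot_atTop.comp hlogb
  have hsub : Tendsto (fun θ : ℝ => Real.log (1-θ+lam1) - Real.log (1-θ))
      (nhdsWithin 1 (Iio 1)) atTop := by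
    simpa [sub_eq_add_neg] using hloga.add_atTop hneg
  exact hsub.const_mul_atTop (by positivity)

lemma tendsto_Lam (hlam0 : lam0 < 0) (hlam1 : 0 < lam1) :
    Tendsto (fun θ : ℝ => Real.log (-lam0 * ∫ t in Ioi (0:ℝ), f lam0 lam1 θ t))
      (nhdsWithin 1 (Iio 1)) atTop := by
  have hLB := tendsto_LB hlam0 hlam1
  have hcomp : Tendsto (fun θ : ℝ => Real.log (-lam0 *
      (Real.exp lam0 / lam1 * (Real.log (1 - θ + lam1) - Real.log (1 - θ)))))
      (nhdsWithin 1 (Iio 1)) atTop :=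
    Real.tendsto_log_atTop.comp (hLB.const_mul_atTop (neg_pos.2 hlam0))
  apply tendsto_atTop_mono' _ ?_ hcomp
  have hev1 := hLB.eventually_gt_atTop 0
  have hev2 : Ioo (0:ℝ) 1 ∈ nhdsWithin (1:ℝ) (Iio 1) :=
    Ioo_mem_nhdsLT_of_mem (by constructor <;> norm_num)
  filter_upwards [hev1, hev2] with θ hθLB hθmem
  apply Real.log_le_log (mul_pos (neg_pos.2 hlam0) hθLB)
  exact mul_le_mul_of_nonneg_left (I_lb hlam0 hlam1 hθmem.1.le hθmem.2) (neg_pos.2 hlam0).le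

lemma R_lb (hlam0 : lam0 < 0) (hlam1 : 0 < lam1) {θ : ℝ} (hθh : 1/2 < θ) (hθ1 : θ < 1) :
    Real.log (-lam0 * ∫ t in Ioi (0:ℝ), f lam0 lam1 θ t) -
      Real.log (-lam0 * ∫ t in Ioi (0:ℝ), f lam0 lam1 (1/2) t)
      ≤ (∫ t in Ioi (0:ℝ), f1 lam0 lam1 θ t) / (∫ t in Ioi (0:ℝ), f lam0 lam1 θ t) := by
  have hmem : ∀ x ∈ Icc (1/2:ℝ) θ, x ∈ Ioo (0:ℝ) 1 :=
    fun x hx => ⟨by norm_num at hx ⊢; linarith [hx.1], by linarith [hx.2]⟩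
  have hcont : ContinuousOn (fun x : ℝ => Real.log (-lam0 * ∫ t in Ioi (0:ℝ), f lam0 lam1 x t))
      (Icc (1/2) θ) :=
    fun x hx => (part1 hlam0 hlam1 (hmem x hx)).continuousAt.continuousWithinAt
  obtain ⟨c, hc, hceq⟩ := exists_hasDerivAt_eq_slope
    (fun x : ℝ => Real.log (-lam0 * ∫ t in Ioi (0:ℝ), f lam0 lam1 x t))
    (fun x : ℝ => (∫ t in Ioi (0:ℝ), f1 lam0 lam1 x t) / (∫ t in Ioi (0:ℝ), f lam0 lam1 x t))
    hθh hcont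
    (fun x hx => part1 hlam0 hlam1 (hmem x (Ioo_subset_Icc_self hx)))
  have hcIoo : c ∈ Ioo (0:ℝ) 1 := ⟨by linarith [hc.1], by linarith [hc.2]⟩
  have hθIoo : θ ∈ Ioo (0:ℝ) 1 := ⟨by linarith, hθ1⟩
  have hRc_le : (∫ t in Ioi (0:ℝ), f1 lam0 lam1 c t) / (∫ t in Ioi (0:ℝ), f lam0 lam1 c t)
      ≤ (∫ t in Ioi (0:ℝ), f1 lam0 lam1 θ t) / (∫ t in Ioi (0:ℝ), f lam0 lam1 θ t) :=
    le_of_lt ((part2 hlam0 hlam1) hcIoo hθIoo hc.2)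
  have hRθpos : 0 < (∫ t in Ioi (0:ℝ), f1 lam0 lam1 θ t) / (∫ t in Ioi (0:ℝ), f lam0 lam1 θ t) :=
    div_pos (I1_pos hlam0 hlam1 hθIoo.1.le hθIoo.2) (I_pos hlam0 hlam1 hθIoo.1.le hθIoo.2)
  have hne : θ - 1/2 ≠ 0 := by linarith
  have hslope : Real.log (-lam0 * ∫ t in Ioi (0:ℝ), f lam0 lam1 θ t) -
      Real.log (-lam0 * ∫ t in Ioi (0:ℝ), f lam0 lam1 (1/2) t)
      = ((∫ t in Ioi (0:ℝ), f1 lam0 lam1 c t) / (∫ t in Ioi (0:ℝ), f lam0 lam1 c t)) * (θ - 1/2) := by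
    rw [hceq, div_mul_cancel₀ _ hne]
  rw [hslope]
  nlinarith [div_nonneg (I1_pos hlam0 hlam1 hcIoo.1.le hcIoo.2).le
    (I_pos hlam0 hlam1 hcIoo.1.le hcIoo.2).le]

lemma part3 (hlam0 : lam0 < 0) (hlam1 : 0 < lam1) :
    Tendsto (fun θ : ℝ =>
        (∫ t in Ioi (0:ℝ), f1 lam0 lam1 θ t) / (∫ t in Ioi (0:ℝ), f lam0 lam1 θ t))
      (nhdsWithin 1 (Iio 1)) atTop := by
  have hL := tendsto_Lam hlam0 hlam1
  have hL' : Tendsto (fun θ : ℝ => Real.log (-lam0 * ∫ t in Ioi (0:ℝ), f lam0 lam1 θ t) -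
      Real.log (-lam0 * ∫ t in Ioi (0:ℝ), f lam0 lam1 (1/2) t)) (nhdsWithin 1 (Iio 1)) atTop := by
    simpa [sub_eq_add_neg] using tendsto_atTop_add_const_right _
      (-Real.log (-lam0 * ∫ t in Ioi (0:ℝ), f lam0 lam1 (1/2) t)) hL
  apply tendsto_atTop_mono' _ ?_ hL'
  have hev : Ioo (1/2:ℝ) 1 ∈ nhdsWithin (1:ℝ) (Iio 1) :=
    Ioo_mem_nhdsLT_of_mem (by constructor <;> norm_num)
  filter_upwards [hev] with θ hθ
  exact R_lb hlam0 hlam1 hθ.1 hθ.2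

end S14

/-- `Λ(θ) = log(-λ₀ ∫₀^∞ e^{λ₀ t}/(1-θe^{-λ₁ t}) dt)` is differentiable on `(0,1)` with
derivative `Λ'(θ)` given by the stated ratio of integrals, `Λ'` is strictly increasing on
`(0,1)`, and `Λ'(θ) → ∞` as `θ ↑ 1`. -/
theorem stmt_14 (lam0 lam1 : ℝ) (hlam0 : lam0 < 0) (hlam1 : 0 < lam1) :
    (∀ theta ∈ Set.Ioo (0:ℝ) 1,
      HasDerivAt (fun x : ℝ =>
          Real.log (-lam0 * ∫ t in Set.Ioi (0:ℝ),
            Real.exp (lam0 * t) / (1 - x * Real.exp (-lam1 * t))))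
        ((∫ t in Set.Ioi (0:ℝ),
            Real.exp (lam0 * t) * Real.exp (-lam1 * t) /
              (1 - theta * Real.exp (-lam1 * t)) ^ 2) /
          (∫ t in Set.Ioi (0:ℝ),
            Real.exp (lam0 * t) / (1 - theta * Real.exp (-lam1 * t))))
        theta) ∧
    StrictMonoOn (fun theta : ℝ =>
        (∫ t in Set.Ioi (0:ℝ),
            Real.exp (lam0 * t) * Real.exp (-lam1 * t) /
              (1 - theta * Real.exp (-lam1 * t)) ^ 2) /
          (∫ t in Set.Ioi (0:ℝ),
            Real.exp (lam0 * t) / (1 - theta * Real.exp (-lam1 * t))))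
      (Set.Ioo 0 1) ∧
    Tendsto (fun theta : ℝ =>
        (∫ t in Set.Ioi (0:ℝ),
            Real.exp (lam0 * t) * Real.exp (-lam1 * t) /
              (1 - theta * Real.exp (-lam1 * t)) ^ 2) /
          (∫ t in Set.Ioi (0:ℝ),
            Real.exp (lam0 * t) / (1 - theta * Real.exp (-lam1 * t))))
      (nhdsWithin 1 (Set.Iio 1)) atTop := by
  refine ⟨fun theta hθ => ?_, ?_, ?_⟩
  · simpa only [S14.f, S14.f1] using S14.part1 hlam0 hlam1 hθ
  · simpa only [S14.f, S14.f1] using S14.part2 hlam0 hlam1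
  · simpa only [S14.f, S14.f1] using S14.part3 hlam0 hlam1
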